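/- Let Φ be an M×N real matrix with columns φ_n, define √A by (√A(x))(n) = |⟨x,φ_n⟩|, let α be the optimal lower Lipschitz constant of √A with respect to d(x,y) = min{‖x-y‖, ‖x+y‖}, and let σ be the largest scalar such that Φ has the σ-strong complement property. Then σ ≤ α ≤ √2·σ. -/

import Mathlib

noncomputable def sqA {M N : ℕ} (Φ : Fin N → EuclideanSpace ℝ (Fin M))
    (x : EuclideanSpace ℝ (Fin M)) : EuclideanSpace ℝ (Fin N) :=
  (WithLp.equiv 2 (Fin N → ℝ)).symm fun n => |(inner ℝ x (Φ n) : ℝ)|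

/-- `Φ` has the `σ`-strong complement property: for every subset `S` of the index
set, the frame operator of `{φ_n}_{n∈S}` or of `{φ_n}_{n∈Sᶜ}` has smallest
eigenvalue at least `σ²`. -/
def SCP {M N : ℕ} (Φ : Fin N → EuclideanSpace ℝ (Fin M)) (σ : ℝ) : Prop :=
  ∀ S : Finset (Fin N),
    (∀ u : EuclideanSpace ℝ (Fin M), σ ^ 2 * ‖u‖ ^ 2 ≤ ∑ n ∈ S, (inner ℝ u (Φ n) : ℝ) ^ 2) ∨
    (∀ u : EuclideanSpace ℝ (Fin M), σ ^ 2 * ‖u‖ ^ 2 ≤ ∑ n ∈ Sᶜ, (inner ℝ u (Φ n) : ℝ) ^ 2)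

lemma sqA_dist_sq {M N : ℕ} (Φ : Fin N → EuclideanSpace ℝ (Fin M))
    (x y : EuclideanSpace ℝ (Fin M)) :
    ‖sqA Φ x - sqA Φ y‖ ^ 2
      = ∑ n, (|(inner ℝ x (Φ n) : ℝ)| - |(inner ℝ y (Φ n) : ℝ)|) ^ 2 := by
  rw [EuclideanSpace.norm_eq, Real.sq_sqrt (by positivity)]
  refine Finset.sum_congr rfl fun n _ => ?_
  simp [sqA, sq_abs]

lemma abs_sub_abs_sq_le_sub (a b : ℝ) : (|a| - |b|) ^ 2 ≤ (a - b) ^ 2 := by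
  have h1 := abs_sub_abs_le_abs_sub a b
  have h2 := abs_sub_abs_le_abs_sub b a
  rw [abs_sub_comm b a] at h2
  nlinarith [sq_abs (a - b), abs_nonneg (a - b)]

lemma abs_sub_abs_sq_le_add (a b : ℝ) : (|a| - |b|) ^ 2 ≤ (a + b) ^ 2 := by
  have := abs_sub_abs_sq_le_sub a (-b)
  simpa [sub_neg_eq_add] using this

lemma min_le_abs_sub_abs_sq (a b : ℝ) :
    min ((a - b) ^ 2) ((a + b) ^ 2) ≤ (|a| - |b|) ^ 2 := by
  have h1 := min_le_left ((a - b) ^ 2) ((a + b) ^ 2)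
  have h2 := min_le_right ((a - b) ^ 2) ((a + b) ^ 2)
  rcases abs_cases a with ⟨ha, _⟩ | ⟨ha, _⟩ <;> rcases abs_cases b with ⟨hb, _⟩ | ⟨hb, _⟩ <;>
    rw [ha, hb] <;> nlinarith [sq_nonneg (a - b), sq_nonneg (a + b)]

theorem stmt_16 (M N : ℕ) (Φ : Fin N → EuclideanSpace ℝ (Fin M)) (α σ : ℝ)
    (hα0 : 0 ≤ α) (hσ0 : 0 ≤ σ)
    (hαlow : ∀ x y : EuclideanSpace ℝ (Fin M),
        α * min ‖x - y‖ ‖x + y‖ ≤ ‖sqA Φ x - sqA Φ y‖)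
    (hαopt : ∀ α' : ℝ, (∀ x y : EuclideanSpace ℝ (Fin M),
        α' * min ‖x - y‖ ‖x + y‖ ≤ ‖sqA Φ x - sqA Φ y‖) → α' ≤ α)
    (hσ : SCP Φ σ)
    (hσopt : ∀ σ' : ℝ, 0 ≤ σ' → SCP Φ σ' → σ' ≤ σ) :
    σ ≤ α ∧ α ≤ Real.sqrt 2 * σ := by
  constructor
  · -- σ ≤ α
    apply hαopt
    intro x y
    set m := min ‖x - y‖ ‖x + y‖ with hm
    have hm0 : 0 ≤ m := le_min (norm_nonneg _) (norm_nonneg _)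
    have key : (σ * m) ^ 2 ≤ ‖sqA Φ x - sqA Φ y‖ ^ 2 := by
      rw [sqA_dist_sq]
      set S : Finset (Fin N) := Finset.univ.filter
        (fun n => ((inner ℝ x (Φ n) : ℝ) + inner ℝ y (Φ n)) ^ 2
          ≤ ((inner ℝ x (Φ n) : ℝ) - inner ℝ y (Φ n)) ^ 2) with hS
      rcases hσ S with h | h
      · have h1 := h (x + y)
        have h2 : ∑ n ∈ S, (inner ℝ (x + y) (Φ n) : ℝ) ^ 2
            ≤ ∑ n, (|(inner ℝ x (Φ n) : ℝ)| - |(inner ℝ y (Φ n) : ℝ)|) ^ 2 := by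
          refine le_trans (Finset.sum_le_sum ?_)
            (Finset.sum_le_sum_of_subset_of_nonneg (Finset.subset_univ S)
              (fun n _ _ => sq_nonneg _))
          intro n hn
          have hmem := (Finset.mem_filter.mp hn).2
          rw [inner_add_left]
          calc ((inner ℝ x (Φ n) : ℝ) + inner ℝ y (Φ n)) ^ 2
              = min (((inner ℝ x (Φ n) : ℝ) - inner ℝ y (Φ n)) ^ 2)
                  (((inner ℝ x (Φ n) : ℝ) + inner ℝ y (Φ n)) ^ 2) := (min_eq_right hmem).symm
            _ ≤ _ := min_le_abs_sub_abs_sq _ _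
        calc (σ * m) ^ 2 = σ ^ 2 * m ^ 2 := by ring
          _ ≤ σ ^ 2 * ‖x + y‖ ^ 2 := by
              have := pow_le_pow_left₀ hm0 (min_le_right ‖x - y‖ ‖x + y‖) 2
              nlinarith [sq_nonneg σ]
          _ ≤ _ := le_trans h1 h2
      · have h1 := h (x - y)
        have h2 : ∑ n ∈ Sᶜ, (inner ℝ (x - y) (Φ n) : ℝ) ^ 2
            ≤ ∑ n, (|(inner ℝ x (Φ n) : ℝ)| - |(inner ℝ y (Φ n) : ℝ)|) ^ 2 := by
          refine le_trans (Finset.sum_le_sum ?_)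
            (Finset.sum_le_sum_of_subset_of_nonneg (Finset.subset_univ Sᶜ)
              (fun n _ _ => sq_nonneg _))
          intro n hn
          have hmem : ¬ (((inner ℝ x (Φ n) : ℝ) + inner ℝ y (Φ n)) ^ 2
              ≤ ((inner ℝ x (Φ n) : ℝ) - inner ℝ y (Φ n)) ^ 2) := by
            have := Finset.mem_compl.mp hn
            simp only [hS, Finset.mem_filter, Finset.mem_univ, true_and] at this
            exact this
          rw [inner_sub_left]
          calc ((inner ℝ x (Φ n) : ℝ) - inner ℝ y (Φ n)) ^ 2
              = min (((inner ℝ x (Φ n) : ℝ) - inner ℝ y (Φ n)) ^ 2)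
                  (((inner ℝ x (Φ n) : ℝ) + inner ℝ y (Φ n)) ^ 2) :=
                (min_eq_left (le_of_lt (lt_of_not_ge hmem))).symm
            _ ≤ _ := min_le_abs_sub_abs_sq _ _
        calc (σ * m) ^ 2 = σ ^ 2 * m ^ 2 := by ring
          _ ≤ σ ^ 2 * ‖x - y‖ ^ 2 := by
              have := pow_le_pow_left₀ hm0 (min_le_left ‖x - y‖ ‖x + y‖) 2
              nlinarith [sq_nonneg σ]
          _ ≤ _ := le_trans h1 h2
    exact le_of_pow_le_pow_left₀ two_ne_zero (norm_nonneg _) key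
  · -- α ≤ √2 σ
    have hs2 : (0:ℝ) < Real.sqrt 2 := by positivity
    have hscp : SCP Φ (α / Real.sqrt 2) := by
      intro S
      by_contra hcon
      push_neg at hcon
      obtain ⟨⟨u, hu⟩, ⟨v, hv⟩⟩ := hcon
      have hσ'sq : (α / Real.sqrt 2) ^ 2 = α ^ 2 / 2 := by
        rw [div_pow, Real.sq_sqrt (by norm_num : (2:ℝ) ≥ 0)]
      have hu0 : 0 < ‖u‖ := by
        rcases (norm_nonneg u).lt_or_eq with h | h
        · exact h
        · exfalso
          have hsum : (0:ℝ) ≤ ∑ n ∈ S, (inner ℝ u (Φ n) : ℝ) ^ 2 :=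
            Finset.sum_nonneg fun n _ => sq_nonneg _
          rw [← h] at hu
          nlinarith
      have hv0 : 0 < ‖v‖ := by
        rcases (norm_nonneg v).lt_or_eq with h | h
        · exact h
        · exfalso
          have hsum : (0:ℝ) ≤ ∑ n ∈ Sᶜ, (inner ℝ v (Φ n) : ℝ) ^ 2 :=
            Finset.sum_nonneg fun n _ => sq_nonneg _
          rw [← h] at hv
          nlinarith
      set x : EuclideanSpace ℝ (Fin M) := ‖v‖ • u + ‖u‖ • v with hx
      set y : EuclideanSpace ℝ (Fin M) := ‖v‖ • u - ‖u‖ • v with hy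
      have hxy1 : x - y = (2 * ‖u‖) • v := by rw [hx, hy]; module
      have hxy2 : x + y = (2 * ‖v‖) • u := by rw [hx, hy]; module
      have hnxy1 : ‖x - y‖ = 2 * (‖u‖ * ‖v‖) := by
        rw [hxy1, norm_smul, Real.norm_eq_abs, abs_of_nonneg (by positivity)]
        ring
      have hnxy2 : ‖x + y‖ = 2 * (‖u‖ * ‖v‖) := by
        rw [hxy2, norm_smul, Real.norm_eq_abs, abs_of_nonneg (by positivity)]
        ring
      have hmin : min ‖x - y‖ ‖x + y‖ = 2 * (‖u‖ * ‖v‖) := by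
        rw [hnxy1, hnxy2, min_self]
      have hDsq : ‖sqA Φ x - sqA Φ y‖ ^ 2
          < 8 * (α / Real.sqrt 2) ^ 2 * (‖u‖ * ‖v‖) ^ 2 := by
        rw [sqA_dist_sq, ← Finset.sum_add_sum_compl S]
        have hSb : ∑ n ∈ S, (|(inner ℝ x (Φ n) : ℝ)| - |(inner ℝ y (Φ n) : ℝ)|) ^ 2
            < (2 * ‖v‖) ^ 2 * ((α / Real.sqrt 2) ^ 2 * ‖u‖ ^ 2) := by
          calc ∑ n ∈ S, (|(inner ℝ x (Φ n) : ℝ)| - |(inner ℝ y (Φ n) : ℝ)|) ^ 2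
              ≤ ∑ n ∈ S, (2 * ‖v‖) ^ 2 * (inner ℝ u (Φ n) : ℝ) ^ 2 := by
                refine Finset.sum_le_sum fun n _ => ?_
                have h1 := abs_sub_abs_sq_le_add (inner ℝ x (Φ n) : ℝ) (inner ℝ y (Φ n) : ℝ)
                have h2 : (inner ℝ x (Φ n) : ℝ) + inner ℝ y (Φ n)
                    = 2 * ‖v‖ * (inner ℝ u (Φ n) : ℝ) := by
                  rw [← inner_add_left, hxy2, real_inner_smul_left]
                rw [h2] at h1
                calc (|(inner ℝ x (Φ n) : ℝ)| - |(inner ℝ y (Φ n) : ℝ)|) ^ 2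
                    ≤ (2 * ‖v‖ * (inner ℝ u (Φ n) : ℝ)) ^ 2 := h1
                  _ = (2 * ‖v‖) ^ 2 * (inner ℝ u (Φ n) : ℝ) ^ 2 := by ring
            _ = (2 * ‖v‖) ^ 2 * ∑ n ∈ S, (inner ℝ u (Φ n) : ℝ) ^ 2 := by
                rw [Finset.mul_sum]
            _ < (2 * ‖v‖) ^ 2 * ((α / Real.sqrt 2) ^ 2 * ‖u‖ ^ 2) := by
                apply mul_lt_mul_of_pos_left hu (by positivity)
        have hScb : ∑ n ∈ Sᶜ, (|(inner ℝ x (Φ n) : ℝ)| - |(inner ℝ y (Φ n) : ℝ)|) ^ 2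
            < (2 * ‖u‖) ^ 2 * ((α / Real.sqrt 2) ^ 2 * ‖v‖ ^ 2) := by
          calc ∑ n ∈ Sᶜ, (|(inner ℝ x (Φ n) : ℝ)| - |(inner ℝ y (Φ n) : ℝ)|) ^ 2
              ≤ ∑ n ∈ Sᶜ, (2 * ‖u‖) ^ 2 * (inner ℝ v (Φ n) : ℝ) ^ 2 := by
                refine Finset.sum_le_sum fun n _ => ?_
                have h1 := abs_sub_abs_sq_le_sub (inner ℝ x (Φ n) : ℝ) (inner ℝ y (Φ n) : ℝ)
                have h2 : (inner ℝ x (Φ n) : ℝ) - inner ℝ y (Φ n)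
                    = 2 * ‖u‖ * (inner ℝ v (Φ n) : ℝ) := by
                  rw [← inner_sub_left, hxy1, real_inner_smul_left]
                rw [h2] at h1
                calc (|(inner ℝ x (Φ n) : ℝ)| - |(inner ℝ y (Φ n) : ℝ)|) ^ 2
                    ≤ (2 * ‖u‖ * (inner ℝ v (Φ n) : ℝ)) ^ 2 := h1
                  _ = (2 * ‖u‖) ^ 2 * (inner ℝ v (Φ n) : ℝ) ^ 2 := by ring
            _ = (2 * ‖u‖) ^ 2 * ∑ n ∈ Sᶜ, (inner ℝ v (Φ n) : ℝ) ^ 2 := by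
                rw [Finset.mul_sum]
            _ < (2 * ‖u‖) ^ 2 * ((α / Real.sqrt 2) ^ 2 * ‖v‖ ^ 2) := by
                apply mul_lt_mul_of_pos_left hv (by positivity)
        nlinarith [hSb, hScb]
      have hlow := hαlow x y
      rw [hmin] at hlow
      have hsq : (α * (2 * (‖u‖ * ‖v‖))) ^ 2 ≤ ‖sqA Φ x - sqA Φ y‖ ^ 2 :=
        pow_le_pow_left₀ (by positivity) hlow 2
      nlinarith [hσ'sq, sq_nonneg (‖u‖ * ‖v‖), mul_pos hu0 hv0]
    have := hσopt (α / Real.sqrt 2) (by positivity) hscp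
    rw [div_le_iff₀ hs2] at this
    calc α ≤ σ * Real.sqrt 2 := this
      _ = Real.sqrt 2 * σ := mul_comm _ _
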